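/- For fixed t > 0 and x > 0, the function z ↦ q_x(t,x,z)/q(t,x,z) is strictly increasing on (0,∞), and its limit as z ↓ 0 equals 1/x - x/t. -/

import Mathlib

open Real Set Filter
open Topology

noncomputable def q (t x y : ℝ) : ℝ :=
  (Real.sqrt (2 * Real.pi * t))⁻¹ *
    (Real.exp (-(x - y) ^ 2 / (2 * t)) - Real.exp (-(x + y) ^ 2 / (2 * t)))

lemma q_hasDerivAt (t x z : ℝ) (ht : 0 < t) :
    HasDerivAt (fun x' => q t x' z)
      ((Real.sqrt (2 * Real.pi * t))⁻¹ *
        ((-(x - z) / t) * Real.exp (-(x - z) ^ 2 / (2 * t)) +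
         ((x + z) / t) * Real.exp (-(x + z) ^ 2 / (2 * t)))) x := by
  have h1 : HasDerivAt (fun x' : ℝ => -(x' - z) ^ 2 / (2 * t))
      (-(2 * (x - z) ^ 1 * 1) / (2 * t)) x :=
    (((hasDerivAt_id x).sub_const z).pow 2).neg.div_const (2 * t)
  have h2 : HasDerivAt (fun x' : ℝ => -(x' + z) ^ 2 / (2 * t))
      (-(2 * (x + z) ^ 1 * 1) / (2 * t)) x :=
    (((hasDerivAt_id x).add_const z).pow 2).neg.div_const (2 * t)
  have h : HasDerivAt (fun x' => q t x' z) _ x := ((h1.exp.sub h2.exp).const_mul (Real.sqrt (2 * Real.pi * t))⁻¹)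
  convert h using 1
  have : (2 : ℝ) * t ≠ 0 := by positivity
  field_simp
  ring

-- ratio closed form
lemma ratio_eq (t x : ℝ) (ht : 0 < t) (hx : 0 < x) {z : ℝ} (hz : 0 < z) :
    deriv (fun x' => q t x' z) x / q t x z
      = (z - x) / t + (2 * z / t) / (Real.exp (2 * x * z / t) - 1) := by
  rw [(q_hasDerivAt t x z ht).deriv]
  have hc : (0 : ℝ) < Real.sqrt (2 * Real.pi * t) :=
    Real.sqrt_pos.mpr (by positivity)
  set c := (Real.sqrt (2 * Real.pi * t))⁻¹ with hc'
  have hcpos : (0 : ℝ) < c := inv_pos.mpr hc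
  set B := Real.exp (-(x + z) ^ 2 / (2 * t)) with hB
  set E := Real.exp (2 * x * z / t) with hE
  have hA : Real.exp (-(x - z) ^ 2 / (2 * t)) = B * E := by
    rw [hB, hE, ← Real.exp_add]
    congr 1
    field_simp
    ring
  have hE1 : 1 < E := by
    have h0 : (0:ℝ) < 2 * x * z / t := by positivity
    calc (1:ℝ) = Real.exp 0 := Real.exp_zero.symm
    _ < E := Real.exp_lt_exp.mpr h0
  have hBpos : 0 < B := Real.exp_pos _
  rw [show q t x z = c * (B * E - B) by rw [q, ← hA]]
  rw [hA]
  have hne : c * (B * E - B) ≠ 0 :=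
    ne_of_gt (mul_pos hcpos (by nlinarith [mul_pos hBpos (sub_pos.mpr hE1)]))
  rw [div_eq_iff hne]
  have hEne : E - 1 ≠ 0 := by linarith
  have ht' : (t:ℝ) ≠ 0 := ne_of_gt ht
  field_simp
  ring

lemma q_pos (t x : ℝ) (ht : 0 < t) (hx : 0 < x) {z : ℝ} (hz : 0 < z) :
    0 < q t x z := by
  have hc : (0 : ℝ) < Real.sqrt (2 * Real.pi * t) :=
    Real.sqrt_pos.mpr (by positivity)
  have h : Real.exp (-(x + z) ^ 2 / (2 * t)) < Real.exp (-(x - z) ^ 2 / (2 * t)) := by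
    apply Real.exp_lt_exp.mpr
    rw [div_lt_div_iff₀ (by positivity) (by positivity)]
    nlinarith [mul_pos (mul_pos hx hz) ht]
  rw [q]
  have := inv_pos.mpr hc
  nlinarith

lemma F_hasDerivAt (t x : ℝ) (ht : 0 < t) (hx : 0 < x) {z : ℝ} (hz : 0 < z) :
    HasDerivAt (fun z => (z - x) / t + (2 * z / t) / (Real.exp (2 * x * z / t) - 1))
      (1 / t + ((2 / t) * (Real.exp (2 * x * z / t) - 1)
          - (2 * z / t) * (Real.exp (2 * x * z / t) * (2 * x * 1 / t)))
        / (Real.exp (2 * x * z / t) - 1) ^ 2) z := by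
  have hE1 : 1 < Real.exp (2 * x * z / t) := by
    have h0 : (0:ℝ) < 2 * x * z / t := by positivity
    calc (1:ℝ) = Real.exp 0 := Real.exp_zero.symm
    _ < _ := Real.exp_lt_exp.mpr h0
  have h1 : HasDerivAt (fun z : ℝ => (z - x) / t) (1 / t) z := by
    simpa using ((hasDerivAt_id z).sub_const x).div_const t
  have hnum : HasDerivAt (fun z : ℝ => 2 * z / t) (2 / t) z := by
    simpa using ((hasDerivAt_id z).const_mul 2).div_const t
  have hden : HasDerivAt (fun z : ℝ => Real.exp (2 * x * z / t) - 1)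
      (Real.exp (2 * x * z / t) * (2 * x * 1 / t)) z := by
    exact ((((hasDerivAt_id z).const_mul (2 * x)).div_const t).exp).sub_const 1
  exact h1.add (hnum.div hden (by linarith))

lemma F_deriv_pos (t x : ℝ) (ht : 0 < t) (hx : 0 < x) {z : ℝ} (hz : 0 < z) :
    0 < 1 / t + ((2 / t) * (Real.exp (2 * x * z / t) - 1)
          - (2 * z / t) * (Real.exp (2 * x * z / t) * (2 * x * 1 / t)))
        / (Real.exp (2 * x * z / t) - 1) ^ 2 := by
  set s := 2 * x * z / t with hs
  have hspos : 0 < s := by positivity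
  set E := Real.exp s with hE
  have hE1 : 1 < E := by
    calc (1:ℝ) = Real.exp 0 := Real.exp_zero.symm
    _ < E := Real.exp_lt_exp.mpr hspos
  have hsinh : s < Real.sinh s := Real.self_lt_sinh_iff.mpr hspos
  rw [Real.sinh_eq] at hsinh
  have hEinv : Real.exp (-s) * E = 1 := by
    rw [hE, ← Real.exp_add]; simp
  have hexpneg : 0 < Real.exp (-s) := Real.exp_pos _
  have hkey : 0 < E ^ 2 - 1 - 2 * s * E := by nlinarith
  have ht' : (t:ℝ) ≠ 0 := ne_of_gt ht
  have hEne : E - 1 ≠ 0 := by linarith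
  have heq : 1 / t + ((2 / t) * (E - 1) - (2 * z / t) * (E * (2 * x * 1 / t))) / (E - 1) ^ 2
      = (E ^ 2 - 1 - 2 * s * E) / (t * (E - 1) ^ 2) := by
    rw [hs]
    field_simp
    ring
  rw [heq]
  exact div_pos hkey (by positivity)

lemma g_lim : Tendsto (fun s : ℝ => s / (Real.exp s - 1)) (𝓝[>] (0:ℝ)) (𝓝 1) := by
  have h := Real.hasDerivAt_exp 0
  have h2 := hasDerivAt_iff_tendsto_slope.mp h
  rw [Real.exp_zero] at h2
  have h3 := h2.inv₀ one_ne_zero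
  rw [inv_one] at h3
  have h4 : Tendsto (fun s => (slope Real.exp 0 s)⁻¹) (𝓝[>] (0:ℝ)) (𝓝 1) :=
    h3.mono_left (nhdsWithin_mono 0 (fun y hy => ne_of_gt hy))
  refine h4.congr (fun s => ?_)
  rw [slope_def_field, Real.exp_zero, sub_zero, inv_div]

theorem stmt_3 (t x : ℝ) (ht : 0 < t) (hx : 0 < x) :
    StrictMonoOn (fun z => deriv (fun x' => q t x' z) x / q t x z) (Set.Ioi (0 : ℝ)) ∧
      Tendsto (fun z => deriv (fun x' => q t x' z) x / q t x z)
        (nhdsWithin 0 (Set.Ioi (0 : ℝ))) (nhds (1 / x - x / t)) := by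
  set F : ℝ → ℝ := fun z => (z - x) / t + (2 * z / t) / (Real.exp (2 * x * z / t) - 1) with hF
  have hEq : Set.EqOn F (fun z => deriv (fun x' => q t x' z) x / q t x z) (Set.Ioi 0) :=
    fun z hz => (ratio_eq t x ht hx hz).symm
  constructor
  · refine (strictMonoOn_of_deriv_pos (convex_Ioi 0) ?_ ?_).congr hEq
    · exact fun z hz => (F_hasDerivAt t x ht hx hz).continuousAt.continuousWithinAt
    · intro z hz
      rw [interior_Ioi] at hz
      rw [hF, (F_hasDerivAt t x ht hx hz).deriv]
      exact F_deriv_pos t x ht hx hz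
  · have h1 : Tendsto (fun z : ℝ => (z - x) / t) (𝓝[>] (0:ℝ)) (𝓝 ((0 - x) / t)) :=
      (((continuous_id.sub continuous_const).div_const t).tendsto 0).mono_left nhdsWithin_le_nhds
    have hphi : Tendsto (fun z : ℝ => 2 * x * z / t) (𝓝[>] (0:ℝ)) (𝓝[>] (0:ℝ)) := by
      rw [tendsto_nhdsWithin_iff]
      constructor
      · have : Tendsto (fun z : ℝ => 2 * x * z / t) (𝓝 0) (𝓝 (2 * x * 0 / t)) :=
          ((continuous_const.mul continuous_id).div_const t).tendsto 0
        simpa using this.mono_left nhdsWithin_le_nhds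
      · filter_upwards [self_mem_nhdsWithin] with z hz
        have hz' : (0:ℝ) < z := hz
        exact Set.mem_Ioi.mpr (by positivity)
    have h2 : Tendsto (fun z : ℝ => (2 * x * z / t) / (Real.exp (2 * x * z / t) - 1))
        (𝓝[>] (0:ℝ)) (𝓝 1) := g_lim.comp hphi
    have h3 : Tendsto (fun z : ℝ => (2 * z / t) / (Real.exp (2 * x * z / t) - 1))
        (𝓝[>] (0:ℝ)) (𝓝 (1 / x * 1)) := by
      refine (h2.const_mul (1 / x)).congr (fun z => ?_)
      have hxx : (1 / x) * (2 * x * z / t) = 2 * z / t := by field_simp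
      rw [← mul_div_assoc, hxx]
    have h4 := h1.add h3
    have : (0 - x) / t + 1 / x * 1 = 1 / x - x / t := by ring
    rw [this] at h4
    exact h4.congr' (by filter_upwards [self_mem_nhdsWithin] with z hz using hEq hz)
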